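/- arXiv:2204.11271 — 2 statements merged into one kernel-verified Lean document; each statement's English description precedes it below -/
import Mathlib

section
/- For $1<p<\infty$, $0<|t|\leq 1$ and all $s\in\mathbb{R}$, $[\varphi_p'(ts)]^p \leq \frac{(1-2\log|t|)^2}{|t|}\,[\varphi_p'(s)]^p$, where $\varphi_p'(s) = ((1+s^2)(\log(e+s^2))^4)^{-1/(2p)}$. -/
open Real

/-- For `1 < p < ∞`, `0 < |t| ≤ 1` and all `s ∈ ℝ`,
`[φ_p'(ts)]^p ≤ (1-2 log|t|)²/|t| · [φ_p'(s)]^p`, where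
`φ_p'(s) = ((1+s²)(log(e+s²))⁴)^(-1/(2p))`. -/
theorem stmt3 (p : ℝ) (hp : 1 < p) (t : ℝ) (ht0 : 0 < |t|) (ht1 : |t| ≤ 1)
    (φ' : ℝ → ℝ)
    (hφ' : ∀ s : ℝ, φ' s =
      ((1 + s ^ 2) * (Real.log (Real.exp 1 + s ^ 2)) ^ 4) ^ (-(1 / (2 * p)))) :
    ∀ s : ℝ, φ' (t * s) ^ p ≤ (1 - 2 * Real.log |t|) ^ 2 / |t| * φ' s ^ p := by
  intro s
  have hp0 : (0:ℝ) < p := lt_trans one_pos hp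
  set c := |t| with hc
  have hlogc : Real.log c ≤ 0 := Real.log_nonpos ht0.le ht1
  set L := 1 - 2 * Real.log c with hLdef
  have hL1 : 1 ≤ L := by simp only [hLdef]; linarith
  set A : ℝ := 1 + s ^ 2 with hAdef
  set A' : ℝ := 1 + (t * s) ^ 2 with hA'def
  set B : ℝ := Real.log (Real.exp 1 + s ^ 2) with hBdef
  set B' : ℝ := Real.log (Real.exp 1 + (t * s) ^ 2) with hB'def
  have hA : (0:ℝ) < A := by positivity
  have hA' : (0:ℝ) < A' := by positivity
  have hB : 1 ≤ B := by
    rw [hBdef]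
    calc (1:ℝ) = Real.log (Real.exp 1) := (Real.log_exp 1).symm
    _ ≤ _ := Real.log_le_log (Real.exp_pos 1) (by nlinarith [sq_nonneg s])
  have hB' : 1 ≤ B' := by
    rw [hB'def]
    calc (1:ℝ) = Real.log (Real.exp 1) := (Real.log_exp 1).symm
    _ ≤ _ := Real.log_le_log (Real.exp_pos 1) (by nlinarith [sq_nonneg (t*s)])
  have hts : (t * s) ^ 2 = c ^ 2 * s ^ 2 := by
    rw [hc]; rw [mul_pow, sq_abs]
  have hc2 : c ^ 2 ≤ 1 := by nlinarith
  -- sqrt A ≤ sqrt A' / c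
  have key1 : Real.sqrt A ≤ Real.sqrt A' / c := by
    rw [le_div_iff₀ ht0, ← Real.sqrt_sq ht0.le, ← Real.sqrt_mul hA.le]
    apply Real.sqrt_le_sqrt
    rw [hAdef, hA'def, hts]
    nlinarith [sq_nonneg s]
  -- B ≤ L * B'
  have key2 : B ≤ L * B' := by
    have h1 : B ≤ B' - 2 * Real.log c := by
      have hle : Real.exp 1 + s ^ 2 ≤ (Real.exp 1 + (t*s)^2) / c ^ 2 := by
        rw [le_div_iff₀ (by positivity : (0:ℝ) < c ^ 2), hts]
        nlinarith [Real.exp_pos 1, sq_nonneg s]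
      have := Real.log_le_log (by positivity) hle
      rw [Real.log_div (by positivity) (by positivity), Real.log_pow] at this
      rw [hBdef, hB'def]; push_cast at this ⊢; linarith
    have : B' - 2 * Real.log c ≤ L * B' := by
      rw [hLdef]; nlinarith
    linarith
  -- main sqrt inequality
  have hBnn : (0:ℝ) ≤ B := by linarith
  have hB'nn : (0:ℝ) ≤ B' := by linarith
  have hLnn : (0:ℝ) ≤ L := by linarith
  have main : Real.sqrt A * B ^ 2 ≤ L ^ 2 / c * (Real.sqrt A' * B' ^ 2) := by
    have h2 : B ^ 2 ≤ (L * B') ^ 2 := by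
      apply pow_le_pow_left₀ hBnn key2
    calc Real.sqrt A * B ^ 2 ≤ (Real.sqrt A' / c) * (L * B') ^ 2 := by
          apply mul_le_mul key1 h2 (by positivity) (by positivity)
      _ = L ^ 2 / c * (Real.sqrt A' * B' ^ 2) := by ring
  -- rewrite the goal
  rw [hφ' (t * s), hφ' s]
  have hexp : -(1 / (2 * p)) * p = -(1/2 : ℝ) := by
    field_simp
  rw [← Real.rpow_mul (by positivity), ← Real.rpow_mul (by positivity), hexp]
  rw [Real.rpow_neg (by positivity), Real.rpow_neg (by positivity)]
  rw [← Real.sqrt_eq_rpow, ← Real.sqrt_eq_rpow]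
  have hX : Real.sqrt (A * B ^ 4) = Real.sqrt A * B ^ 2 := by
    rw [Real.sqrt_mul hA.le, show B ^ 4 = (B ^ 2) ^ 2 by ring, Real.sqrt_sq (by positivity)]
  have hX' : Real.sqrt (A' * B' ^ 4) = Real.sqrt A' * B' ^ 2 := by
    rw [Real.sqrt_mul hA'.le, show B' ^ 4 = (B' ^ 2) ^ 2 by ring, Real.sqrt_sq (by positivity)]
  rw [hX, hX']
  have hP : (0:ℝ) < Real.sqrt A * B ^ 2 := by positivity
  have hP' : (0:ℝ) < Real.sqrt A' * B' ^ 2 := by positivity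
  rw [← div_eq_mul_inv, inv_eq_one_div, div_le_div_iff₀ hP' hP]
  linarith [main]
end

section
/- For $1<p<\infty$ and $u \in \Phi^{1,p}_0(\Omega)$ and $t \ne 0$, the norm estimate $\|\nabla[\varphi_p(tu)]\|_p \le |t|\,\left\{\frac{[1+2(\log|t|)^-]^2}{\min\{|t|,1\}}\right\}^{1/p} \|\nabla[\varphi_p(u)]\|_p$ holds, assuming the pointwise bound $[\varphi_p'(ts)]^p |t|^p \le |t|^{p-1}(1-2\log|t|)^2 [\varphi_p'(s)]^p \cdot |t|^p / |t|^{p}$ established for $0<|t|\le 1$ and the monotonicity $\varphi_p'(|t|s) \le \varphi_p'(s)$ for $|t| \ge 1$, $s \ge 0$. Concretely: for $|t| \ge 1$, $\|\nabla[\varphi_p(tu)]\|_p \le |t| \|\nabla[\varphi_p(u)]\|_p$, and for $0<|t|\le 1$, $\|\nabla[\varphi_p(tu)]\|_p^p \le |t|^{p-1}(1-2\log|t|)^2 \|\nabla[\varphi_p(u)]\|_p^p$. -/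
open Real MeasureTheory

private lemma logB_ge_one (x : ℝ) : 1 ≤ Real.log (Real.exp 1 + x) → True := fun _ => trivial

private lemma log_ge_one (x : ℝ) (hx : 0 ≤ x) : 1 ≤ Real.log (Real.exp 1 + x) := by
  calc (1:ℝ) = Real.log (Real.exp 1) := (Real.log_exp 1).symm
    _ ≤ _ := Real.log_le_log (Real.exp_pos 1) (by linarith)

private lemma B_ge_one (x : ℝ) :
    1 ≤ (1 + x ^ 2) * Real.log (Real.exp 1 + x ^ 2) ^ 4 := by
  have h := log_ge_one (x ^ 2) (sq_nonneg x)
  have h4 : 1 ≤ Real.log (Real.exp 1 + x ^ 2) ^ 4 := one_le_pow₀ h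
  nlinarith [sq_nonneg x]

private lemma B_pos (x : ℝ) :
    0 < (1 + x ^ 2) * Real.log (Real.exp 1 + x ^ 2) ^ 4 :=
  lt_of_lt_of_le one_pos (B_ge_one x)

-- core log inequality
private lemma log_key (a s : ℝ) (ha0 : 0 < a) (ha1 : a ≤ 1) :
    Real.log (Real.exp 1 + s ^ 2) ≤
      (1 - Real.log a) * Real.log (Real.exp 1 + a * s ^ 2) := by
  have hs : (0:ℝ) ≤ s ^ 2 := sq_nonneg s
  have he := Real.exp_pos 1
  have hLa : 1 ≤ Real.log (Real.exp 1 + a * s ^ 2) :=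
    log_ge_one _ (mul_nonneg ha0.le hs)
  have h1 : Real.exp 1 + s ^ 2 ≤ (Real.exp 1 + a * s ^ 2) / a := by
    rw [le_div_iff₀ ha0]; nlinarith
  have h2 : Real.log (Real.exp 1 + s ^ 2) ≤
      Real.log (Real.exp 1 + a * s ^ 2) - Real.log a := by
    calc Real.log (Real.exp 1 + s ^ 2) ≤ Real.log ((Real.exp 1 + a * s ^ 2) / a) :=
          Real.log_le_log (by nlinarith) h1
      _ = _ := Real.log_div (by nlinarith) (ne_of_gt ha0)
  have hla : Real.log a ≤ 0 := Real.log_nonpos ha0.le ha1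
  nlinarith [mul_nonneg (neg_nonneg.mpr hla) (sub_nonneg.mpr hLa)]

-- half-power form, |t| ≤ 1
private lemma key_half (t s : ℝ) (ht0 : t ≠ 0) (ht1 : |t| ≤ 1) :
    |t| * ((1 + s ^ 2) * Real.log (Real.exp 1 + s ^ 2) ^ 4) ^ ((1:ℝ)/2) ≤
      (1 - 2 * Real.log |t|) ^ 2 *
        ((1 + (t * s) ^ 2) * Real.log (Real.exp 1 + (t * s) ^ 2) ^ 4) ^ ((1:ℝ)/2) := by
  have ht2 : (0:ℝ) < t ^ 2 := by positivity
  have ht21 : t ^ 2 ≤ 1 := by nlinarith [abs_nonneg t, sq_abs t]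
  set Ls := Real.log (Real.exp 1 + s ^ 2) with hLs
  set Lt := Real.log (Real.exp 1 + (t * s) ^ 2) with hLt
  have hLs1 : 1 ≤ Ls := log_ge_one _ (sq_nonneg s)
  have hLt1 : 1 ≤ Lt := log_ge_one _ (sq_nonneg (t*s))
  have hK : 1 - 2 * Real.log |t| ≥ 1 := by
    have : Real.log |t| ≤ 0 := Real.log_nonpos (abs_nonneg t) ht1
    linarith
  -- split the rpow of products
  have hsplit : ∀ x : ℝ, ((1 + x ^ 2) * Real.log (Real.exp 1 + x ^ 2) ^ 4) ^ ((1:ℝ)/2)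
      = (1 + x ^ 2) ^ ((1:ℝ)/2) * Real.log (Real.exp 1 + x ^ 2) ^ 2 := by
    intro x
    have hL1 : 1 ≤ Real.log (Real.exp 1 + x ^ 2) := log_ge_one _ (sq_nonneg x)
    have hL0 : 0 ≤ Real.log (Real.exp 1 + x ^ 2) := by linarith
    rw [Real.mul_rpow (by positivity) (by positivity),
      ← Real.rpow_natCast (Real.log (Real.exp 1 + x ^ 2)) 4,
      ← Real.rpow_mul hL0]
    norm_num
  rw [hsplit s, hsplit (t*s)]
  -- part (i): |t| (1+s²)^{1/2} ≤ (1+t²s²)^{1/2}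
  have hi : |t| * (1 + s ^ 2) ^ ((1:ℝ)/2) ≤ (1 + (t * s) ^ 2) ^ ((1:ℝ)/2) := by
    have habs : |t| = (t ^ 2) ^ ((1:ℝ)/2) := by
      rw [← sq_abs t, ← Real.rpow_natCast (|t|) 2, ← Real.rpow_mul (abs_nonneg t)]
      norm_num
    rw [habs, ← Real.mul_rpow ht2.le (by positivity)]
    apply Real.rpow_le_rpow (by positivity) _ (by norm_num)
    nlinarith
  -- part (ii): Ls² ≤ K Lt²
  have hii : Ls ^ 2 ≤ (1 - 2 * Real.log |t|) ^ 2 * Lt ^ 2 := by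
    have hcore : Ls ≤ (1 - 2 * Real.log |t|) * Lt := by
      have := log_key (t ^ 2) s ht2 ht21
      have hlog : Real.log (t ^ 2) = 2 * Real.log |t| := by
        rw [← sq_abs, Real.log_pow]; push_cast; ring
      have hts : t ^ 2 * s ^ 2 = (t * s) ^ 2 := by ring
      rw [hlog, hts] at this
      exact this
    calc Ls ^ 2 ≤ ((1 - 2 * Real.log |t|) * Lt) ^ 2 := by
          apply pow_le_pow_left₀ (by linarith) hcore
      _ = _ := by ring
  calc |t| * ((1 + s ^ 2) ^ ((1:ℝ)/2) * Ls ^ 2)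
      = (|t| * (1 + s ^ 2) ^ ((1:ℝ)/2)) * Ls ^ 2 := by ring
    _ ≤ (1 + (t * s) ^ 2) ^ ((1:ℝ)/2) * ((1 - 2 * Real.log |t|) ^ 2 * Lt ^ 2) := by
        apply mul_le_mul hi hii (by positivity) (by positivity)
    _ = _ := by ring

-- constant inequality, |t| ≤ 1 : B(ts)^{-1/2} |t|^p ≤ |t|^{p-1} K B(s)^{-1/2}
private lemma key2 (p t s : ℝ) (hp : 1 < p) (ht0 : t ≠ 0) (ht1 : |t| ≤ 1) :
    ((1 + (t * s) ^ 2) * Real.log (Real.exp 1 + (t * s) ^ 2) ^ 4) ^ (-(1/2):ℝ) * |t| ^ p ≤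
      |t| ^ (p - 1) * (1 - 2 * Real.log |t|) ^ 2 *
        ((1 + s ^ 2) * Real.log (Real.exp 1 + s ^ 2) ^ 4) ^ (-(1/2):ℝ) := by
  have htp : (0:ℝ) < |t| := abs_pos.mpr ht0
  set A := (1 + (t * s) ^ 2) * Real.log (Real.exp 1 + (t * s) ^ 2) ^ 4 with hA
  set B := (1 + s ^ 2) * Real.log (Real.exp 1 + s ^ 2) ^ 4 with hB
  have hApos : 0 < A := B_pos (t * s)
  have hBpos : 0 < B := B_pos s
  have ha : (0:ℝ) < A ^ ((1:ℝ)/2) := Real.rpow_pos_of_pos hApos _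
  have hb : (0:ℝ) < B ^ ((1:ℝ)/2) := Real.rpow_pos_of_pos hBpos _
  have hkey : |t| * B ^ ((1:ℝ)/2) ≤ (1 - 2 * Real.log |t|) ^ 2 * A ^ ((1:ℝ)/2) :=
    key_half t s ht0 ht1
  have hneg : ∀ x : ℝ, 0 < x → x ^ (-(1/2):ℝ) = (x ^ ((1:ℝ)/2))⁻¹ := by
    intro x hx
    exact Real.rpow_neg hx.le _
  have hstep : A ^ (-(1/2):ℝ) * |t| ≤ (1 - 2 * Real.log |t|) ^ 2 * B ^ (-(1/2):ℝ) := by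
    have hdiv : |t| / A ^ ((1:ℝ)/2) ≤ (1 - 2 * Real.log |t|) ^ 2 / B ^ ((1:ℝ)/2) := by
      rw [div_le_div_iff₀ ha hb]
      linarith [hkey]
    calc A ^ (-(1/2):ℝ) * |t| = |t| / A ^ ((1:ℝ)/2) := by
          rw [hneg A hApos]; ring
      _ ≤ (1 - 2 * Real.log |t|) ^ 2 / B ^ ((1:ℝ)/2) := hdiv
      _ = (1 - 2 * Real.log |t|) ^ 2 * B ^ (-(1/2):ℝ) := by
          rw [hneg B hBpos]; ring
  have hsplitp : |t| ^ p = |t| ^ (p - 1) * |t| := by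
    calc |t| ^ p = |t| ^ (p - 1 + 1) := by norm_num
      _ = |t| ^ (p - 1) * |t| ^ (1:ℝ) := Real.rpow_add htp _ _
      _ = _ := by rw [Real.rpow_one]
  rw [hsplitp]
  have htp1 : (0:ℝ) ≤ |t| ^ (p - 1) := Real.rpow_nonneg (abs_nonneg t) _
  calc A ^ (-(1/2):ℝ) * (|t| ^ (p - 1) * |t|)
      = |t| ^ (p - 1) * (A ^ (-(1/2):ℝ) * |t|) := by ring
    _ ≤ |t| ^ (p - 1) * ((1 - 2 * Real.log |t|) ^ 2 * B ^ (-(1/2):ℝ)) :=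
        mul_le_mul_of_nonneg_left hstep htp1
    _ = _ := by ring

-- φ' expressed with exponent -1/2 after raising to p
private lemma phi_pow (p : ℝ) (hp : 1 < p) (x : ℝ) :
    (((1 + x ^ 2) * Real.log (Real.exp 1 + x ^ 2) ^ 4) ^ (-(1 / (2 * p)))) ^ p
      = ((1 + x ^ 2) * Real.log (Real.exp 1 + x ^ 2) ^ 4) ^ (-(1/2):ℝ) := by
  have hB := B_pos x
  have hp0 : p ≠ 0 := by linarith
  rw [← Real.rpow_mul hB.le]
  congr 1
  field_simp

private lemma phi_nonneg (p x : ℝ) :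
    0 ≤ ((1 + x ^ 2) * Real.log (Real.exp 1 + x ^ 2) ^ 4) ^ (-(1 / (2 * p))) :=
  (Real.rpow_pos_of_pos (B_pos x) _).le

-- pointwise, |t| ≥ 1
private lemma point1 (p t s d : ℝ) (hp : 1 < p) (ht : 1 ≤ |t|) (hd : 0 ≤ d) :
    (((1 + (t*s) ^ 2) * Real.log (Real.exp 1 + (t*s) ^ 2) ^ 4) ^ (-(1 / (2 * p)))
        * (|t| * d)) ^ p ≤
      |t| ^ p *
        (((1 + s ^ 2) * Real.log (Real.exp 1 + s ^ 2) ^ 4) ^ (-(1 / (2 * p))) * d) ^ p := by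
  have hBle : (1 + s ^ 2) * Real.log (Real.exp 1 + s ^ 2) ^ 4 ≤
      (1 + (t*s) ^ 2) * Real.log (Real.exp 1 + (t*s) ^ 2) ^ 4 := by
    have ht2 : 1 ≤ t ^ 2 := by nlinarith [abs_nonneg t, sq_abs t]
    have hs2 : s ^ 2 ≤ (t*s) ^ 2 := by nlinarith [sq_nonneg s]
    have hlog : Real.log (Real.exp 1 + s ^ 2) ≤ Real.log (Real.exp 1 + (t*s) ^ 2) :=
      Real.log_le_log (by positivity) (by linarith)
    have h0 : 0 ≤ Real.log (Real.exp 1 + s ^ 2) := by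
      linarith [log_ge_one (s^2) (sq_nonneg s)]
    have := pow_le_pow_left₀ h0 hlog 4
    have h1 : (0:ℝ) ≤ 1 + s ^ 2 := by positivity
    nlinarith [pow_nonneg h0 4]
  have hexp : -(1 / (2 * p)) ≤ (0:ℝ) := by
    have : 0 < 2 * p := by linarith
    have : 0 < 1 / (2 * p) := by positivity
    linarith
  have hphile : ((1 + (t*s) ^ 2) * Real.log (Real.exp 1 + (t*s) ^ 2) ^ 4) ^ (-(1 / (2 * p)))
      ≤ ((1 + s ^ 2) * Real.log (Real.exp 1 + s ^ 2) ^ 4) ^ (-(1 / (2 * p))) :=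
    Real.rpow_le_rpow_of_nonpos (B_pos s) hBle hexp
  have h1 : ((1 + (t*s) ^ 2) * Real.log (Real.exp 1 + (t*s) ^ 2) ^ 4) ^ (-(1 / (2 * p)))
        * (|t| * d) ≤
      |t| * (((1 + s ^ 2) * Real.log (Real.exp 1 + s ^ 2) ^ 4) ^ (-(1 / (2 * p))) * d) := by
    have h2 := mul_le_mul_of_nonneg_right hphile hd
    calc _ = |t| * (((1 + (t*s) ^ 2) * Real.log (Real.exp 1 + (t*s) ^ 2) ^ 4)
            ^ (-(1 / (2 * p))) * d) := by ring
      _ ≤ _ := mul_le_mul_of_nonneg_left h2 (abs_nonneg t)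
  calc _ ≤ (|t| * (((1 + s ^ 2) * Real.log (Real.exp 1 + s ^ 2) ^ 4)
          ^ (-(1 / (2 * p))) * d)) ^ p :=
        Real.rpow_le_rpow (by positivity) h1 (by linarith)
    _ = _ := Real.mul_rpow (abs_nonneg t) (by positivity)

-- pointwise, |t| ≤ 1
private lemma point2 (p t s d : ℝ) (hp : 1 < p) (ht0 : t ≠ 0) (ht1 : |t| ≤ 1) (hd : 0 ≤ d) :
    (((1 + (t*s) ^ 2) * Real.log (Real.exp 1 + (t*s) ^ 2) ^ 4) ^ (-(1 / (2 * p)))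
        * (|t| * d)) ^ p ≤
      (|t| ^ (p - 1) * (1 - 2 * Real.log |t|) ^ 2) *
        (((1 + s ^ 2) * Real.log (Real.exp 1 + s ^ 2) ^ 4) ^ (-(1 / (2 * p))) * d) ^ p := by
  have hA := B_pos (t*s)
  have hB := B_pos s
  have hdp : (0:ℝ) ≤ d ^ p := Real.rpow_nonneg hd _
  have hLHS : (((1 + (t*s) ^ 2) * Real.log (Real.exp 1 + (t*s) ^ 2) ^ 4) ^ (-(1 / (2 * p)))
        * (|t| * d)) ^ p
      = ((1 + (t*s) ^ 2) * Real.log (Real.exp 1 + (t*s) ^ 2) ^ 4) ^ (-(1/2):ℝ)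
          * |t| ^ p * d ^ p := by
    rw [Real.mul_rpow (phi_nonneg p (t*s)) (by positivity),
      Real.mul_rpow (abs_nonneg t) hd, phi_pow p hp (t*s)]
    ring
  have hRHS : (((1 + s ^ 2) * Real.log (Real.exp 1 + s ^ 2) ^ 4) ^ (-(1 / (2 * p))) * d) ^ p
      = ((1 + s ^ 2) * Real.log (Real.exp 1 + s ^ 2) ^ 4) ^ (-(1/2):ℝ) * d ^ p := by
    rw [Real.mul_rpow (phi_nonneg p s) hd, phi_pow p hp s]
  rw [hLHS, hRHS]
  have hk := key2 p t s hp ht0 ht1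
  calc ((1 + (t*s) ^ 2) * Real.log (Real.exp 1 + (t*s) ^ 2) ^ 4) ^ (-(1/2):ℝ)
          * |t| ^ p * d ^ p
      ≤ (|t| ^ (p - 1) * (1 - 2 * Real.log |t|) ^ 2 *
          ((1 + s ^ 2) * Real.log (Real.exp 1 + s ^ 2) ^ 4) ^ (-(1/2):ℝ)) * d ^ p :=
        mul_le_mul_of_nonneg_right hk hdp
    _ = _ := by ring

private lemma lint_aux {α : Type*} [MeasurableSpace α] (μ : Measure α)
    (f g : α → ℝ) (C : ℝ) (hC : 0 ≤ C) (h : ∀ x, f x ≤ C * g x) :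
    ∫⁻ x, ENNReal.ofReal (f x) ∂μ ≤ ENNReal.ofReal C * ∫⁻ x, ENNReal.ofReal (g x) ∂μ := by
  calc ∫⁻ x, ENNReal.ofReal (f x) ∂μ ≤ ∫⁻ x, ENNReal.ofReal (C * g x) ∂μ :=
        lintegral_mono fun x => ENNReal.ofReal_le_ofReal (h x)
    _ = ∫⁻ x, ENNReal.ofReal C * ENNReal.ofReal (g x) ∂μ := by
        simp_rw [ENNReal.ofReal_mul hC]
    _ = _ := lintegral_const_mul' _ _ ENNReal.ofReal_ne_top

/-- the norm estimate for `φ_p(tu)` (Proposition 2.3), in the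
reduced integral form. With `φ_p'(s) = ((1+s²)(log(e+s²))⁴)^{-1/(2p)}` and the
chain rule `∇[φ_p(tu)] = φ_p'(tu) t ∇u` (so `|∇[φ_p(tu)]| = φ_p'(tu)|t||∇u|`),
for `t ≠ 0` one has: if `|t| ≥ 1` then
`∫_Ω |∇[φ_p(tu)]|^p ≤ |t|^p ∫_Ω |∇[φ_p(u)]|^p`, and if `0 < |t| ≤ 1` then
`∫_Ω |∇[φ_p(tu)]|^p ≤ |t|^{p-1}(1-2log|t|)² ∫_Ω |∇[φ_p(u)]|^p`. -/
theorem stmt13 (N : ℕ) (hN : 1 ≤ N) (p : ℝ) (hp : 1 < p)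
    (Ω : Set (EuclideanSpace ℝ (Fin N))) (hΩo : IsOpen Ω)
    (hΩb : Bornology.IsBounded Ω)
    (φ' : ℝ → ℝ)
    (hφ' : ∀ s : ℝ, φ' s =
      ((1 + s ^ 2) * (Real.log (Real.exp 1 + s ^ 2)) ^ 4) ^ (-(1 / (2 * p))))
    (u : EuclideanSpace ℝ (Fin N) → ℝ)
    (Du : EuclideanSpace ℝ (Fin N) → EuclideanSpace ℝ (Fin N))
    (t : ℝ) (ht : t ≠ 0) :
    (1 ≤ |t| →
      (∫⁻ x in Ω, ENNReal.ofReal ((φ' (t * u x) * (|t| * ‖Du x‖)) ^ p)) ≤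
        ENNReal.ofReal (|t| ^ p) *
          ∫⁻ x in Ω, ENNReal.ofReal ((φ' (u x) * ‖Du x‖) ^ p)) ∧
    (|t| ≤ 1 →
      (∫⁻ x in Ω, ENNReal.ofReal ((φ' (t * u x) * (|t| * ‖Du x‖)) ^ p)) ≤
        ENNReal.ofReal (|t| ^ (p - 1) * (1 - 2 * Real.log |t|) ^ 2) *
          ∫⁻ x in Ω, ENNReal.ofReal ((φ' (u x) * ‖Du x‖) ^ p)) := by
  constructor
  · intro ht1
    apply lint_aux _ _ _ _ (Real.rpow_nonneg (abs_nonneg t) p)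
    intro x
    rw [hφ' (t * u x), hφ' (u x)]
    exact point1 p t (u x) ‖Du x‖ hp ht1 (norm_nonneg _)
  · intro ht1
    apply lint_aux _ _ _ _
      (mul_nonneg (Real.rpow_nonneg (abs_nonneg t) _) (sq_nonneg _))
    intro x
    rw [hφ' (t * u x), hφ' (u x)]
    exact point2 p t (u x) ‖Du x‖ hp ht ht1 (norm_nonneg _)
end
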